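/- arXiv:2408.13053 — 2 statements merged into one kernel-verified Lean document; each statement's English description precedes it below -/
import Mathlib

section
/- Let f : ℝⁿ → ℝ be convex and differentiable at x₀, H positive semidefinite, and suppose x_v satisfies q(x_v; α, x₀) > f(x_v) for some α ∈ [0,1] (overestimation). Then d := (x_v - x₀)ᵀH(x_v - x₀) > 0 and the updated value α* := 2(f(x_v) - f(x₀) - ⟪∇f(x₀), x_v - x₀⟫)/d satisfies 0 ≤ α* < α. -/
open Matrix Set

lemma grad_ineq {n : ℕ} (f : (Fin n → ℝ) → ℝ) (x₀ xv : Fin n → ℝ)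
    (hconv : ConvexOn ℝ Set.univ f) (hdiff : DifferentiableAt ℝ f x₀) :
    f x₀ + fderiv ℝ f x₀ (xv - x₀) ≤ f xv := by
  set v := xv - x₀ with hv
  have hline : HasDerivAt (fun t : ℝ => f (x₀ + t • v)) (fderiv ℝ f x₀ v) 0 := by
    have h1 : HasDerivAt (fun t : ℝ => x₀ + t • v) v 0 := by
      simpa using ((hasDerivAt_id (0:ℝ)).smul_const v).const_add x₀
    have h2 : HasFDerivAt f (fderiv ℝ f x₀) (x₀ + (0:ℝ) • v) := by
      simpa using hdiff.hasFDerivAt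
    exact (h2.comp_hasDerivAt 0 h1)
  rw [hasDerivAt_iff_tendsto_slope] at hline
  have hline' : Filter.Tendsto (slope (fun t : ℝ => f (x₀ + t • v)) 0)
      (nhdsWithin 0 (Set.Ioi 0)) (nhds (fderiv ℝ f x₀ v)) :=
    hline.mono_left (nhdsWithin_mono _ (fun t ht => ne_of_gt ht))
  have hbound : ∀ᶠ t in nhdsWithin (0:ℝ) (Set.Ioi 0),
      slope (fun t : ℝ => f (x₀ + t • v)) 0 t ≤ f xv - f x₀ := by
    filter_upwards [Ioo_mem_nhdsGT_of_mem (by norm_num : (0:ℝ) ∈ Set.Ico 0 1)] with t ht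
    have ht0 : 0 < t := ht.1
    have ht1 : t < 1 := ht.2
    have key := hconv.2 (Set.mem_univ x₀) (Set.mem_univ xv)
      (by linarith : (0:ℝ) ≤ 1 - t) (le_of_lt ht0) (by ring)
    simp only [smul_eq_mul] at key
    have heq : x₀ + t • v = (1 - t) • x₀ + t • xv := by rw [hv]; module
    rw [slope_def_field]
    simp only [sub_zero, zero_smul, add_zero]
    rw [div_le_iff₀ ht0, heq]
    linarith
  have hle : fderiv ℝ f x₀ v ≤ f xv - f x₀ :=
    le_of_tendsto hline' hbound
  linarith

theorem stmt7 (n : ℕ) (f : (Fin n → ℝ) → ℝ) (x₀ xv : Fin n → ℝ)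
    (hconv : ConvexOn ℝ Set.univ f) (hdiff : DifferentiableAt ℝ f x₀)
    (H : Matrix (Fin n) (Fin n) ℝ) (hH : H.PosSemidef)
    (α : ℝ) (hα : α ∈ Set.Icc (0 : ℝ) 1)
    (hover : f x₀ + fderiv ℝ f x₀ (xv - x₀)
      + (α / 2) * ((xv - x₀) ⬝ᵥ H.mulVec (xv - x₀)) > f xv) :
    0 < (xv - x₀) ⬝ᵥ H.mulVec (xv - x₀) ∧
      0 ≤ 2 * (f xv - f x₀ - fderiv ℝ f x₀ (xv - x₀)) / ((xv - x₀) ⬝ᵥ H.mulVec (xv - x₀)) ∧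
      2 * (f xv - f x₀ - fderiv ℝ f x₀ (xv - x₀)) / ((xv - x₀) ⬝ᵥ H.mulVec (xv - x₀)) < α := by
  have hg : 0 ≤ f xv - f x₀ - fderiv ℝ f x₀ (xv - x₀) := by
    have := grad_ineq f x₀ xv hconv hdiff
    linarith
  set d := (xv - x₀) ⬝ᵥ H.mulVec (xv - x₀) with hd
  have hd0 : 0 ≤ d := hH.dotProduct_mulVec_nonneg (xv - x₀)
  have hα1 : α ≤ 1 := hα.2
  have hdpos : 0 < d := by
    by_contra h
    push_neg at h
    have hdz : d = 0 := le_antisymm h hd0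
    rw [hdz] at hover
    simp only [mul_zero, add_zero] at hover
    linarith
  refine ⟨hdpos, div_nonneg (by linarith) hd0, ?_⟩
  rw [div_lt_iff₀ hdpos]
  nlinarith
end

section
/- Let f : ℝⁿ → ℝ be convex and differentiable at w_x with f(w_x) = w_t, and suppose (x_u, t_u) satisfies f(x_u) > t_u and lies on the ray from an interior epigraph point through w (i.e., (x_u,t_u) = w + s·((x_u,t_u) − (x_p,t_p)) for some s > 0 with f(x_p) < t_p and w strictly between them). Then the cut ℓ(x,t) := f(w_x) + ⟪∇f(w_x), x − w_x⟫ − t is strictly positive at (x_u, t_u): ℓ(x_u, t_u) > 0. -/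
open Set

lemma grad_ineq_aux (n : ℕ) (f : (Fin n → ℝ) → ℝ) (hconv : ConvexOn ℝ Set.univ f)
    (w y : Fin n → ℝ) (hdiff : DifferentiableAt ℝ f w) :
    f w + fderiv ℝ f w (y - w) ≤ f y := by
  rcases eq_or_ne y w with rfl | hne
  · simp
  set g : ℝ → Fin n → ℝ := fun t => w + t • (y - w) with hg
  have hgc : ConvexOn ℝ Set.univ (f ∘ g) := by
    have : ConvexOn ℝ ((AffineMap.lineMap w y : ℝ →ᵃ[ℝ] (Fin n → ℝ)) ⁻¹' Set.univ)
        (f ∘ (AffineMap.lineMap w y : ℝ →ᵃ[ℝ] (Fin n → ℝ))) :=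
      hconv.comp_affineMap _
    have heq : g = fun t => (AffineMap.lineMap w y : ℝ →ᵃ[ℝ] (Fin n → ℝ)) t := by
      funext t; simp [hg, AffineMap.lineMap_apply]; module
    rw [hg] at heq ⊢
    rw [heq]
    simpa using this
  have hlin : HasDerivAt g (y - w) 0 := by
    have h1 : HasDerivAt (fun t : ℝ => t • (y - w)) (y - w) 0 := by
      simpa using (hasDerivAt_id (0:ℝ)).smul_const (y - w)
    simpa [hg] using h1.const_add w
  have hg0 : g 0 = w := by simp [hg]
  have hfd : HasDerivAt (f ∘ g) (fderiv ℝ f w (y - w)) 0 := by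
    have hF : HasFDerivAt f (fderiv ℝ f w) (g 0) := hg0 ▸ hdiff.hasFDerivAt
    exact hF.comp_hasDerivAt 0 hlin
  have hslope := hgc.le_slope_of_hasDerivAt (Set.mem_univ (0:ℝ)) (Set.mem_univ (1:ℝ))
    one_pos hfd
  have hslope' : fderiv ℝ f w (y - w) ≤ f (g 1) - f (g 0) := by
    simpa [slope_def_field] using hslope
  have hg1 : g 1 = y := by simp [hg]
  rw [hg0, hg1] at hslope'
  linarith

theorem stmt11 (n : ℕ) (f : (Fin n → ℝ) → ℝ) (hconv : ConvexOn ℝ Set.univ f)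
    (wx xu xp : Fin n → ℝ) (wt tu tp : ℝ)
    (hdiff : DifferentiableAt ℝ f wx) (hw : f wx = wt)
    (hp : f xp < tp) (hu : f xu > tu)
    (l : ℝ) (hl : l ∈ Set.Ioo (0 : ℝ) 1)
    (hwx : wx = l • xu + (1 - l) • xp) (hwt : wt = l * tu + (1 - l) * tp) :
    f wx + fderiv ℝ f wx (xu - wx) - tu > 0 := by
  obtain ⟨hl0, hl1⟩ := hl
  have hgrad := grad_ineq_aux n f hconv wx xp hdiff
  -- xp - wx = l • (xp - xu), xu - wx = (1 - l) • (xu - xp)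
  have hxp : xp - wx = l • (xp - xu) := by
    rw [hwx]; ext i; simp [smul_sub]; ring
  have hxu : xu - wx = (1 - l) • (xu - xp) := by
    rw [hwx]; ext i; simp [smul_sub]; ring
  set D := fderiv ℝ f wx
  have h1 : D (xp - wx) = l * D (xp - xu) := by rw [hxp, map_smul]; rfl
  have h2 : D (xu - wx) = (1 - l) * D (xu - xp) := by rw [hxu, map_smul]; rfl
  have h3 : D (xp - xu) = - D (xu - xp) := by
    rw [show xp - xu = -(xu - xp) by abel, map_neg]
  have hfw : f wx = l * tu + (1 - l) * tp := by rw [hw, hwt]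
  -- From gradient inequality: f wx + l * D(xp - xu) ≤ f xp < tp
  rw [h1] at hgrad
  have key : l * D (xu - xp) > l * (tu - tp) := by
    have : f wx - l * D (xu - xp) < tp := by rw [h3] at hgrad; linarith
    nlinarith
  have hA : D (xu - xp) > tu - tp := by
    have := (mul_lt_mul_iff_right₀ hl0).mp key
    linarith
  rw [h2]
  nlinarith [hA, hl1, hl0]
end
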